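/- Let a₁₂, a₂₂, c₁, ω, H₀ be reals with a₁₂a₂₂ ≠ 0, ω ≠ 0, H₀ ≠ 0. Define g(v) = ((a₂₂² + (ωc₁)²)/(2H₀a₂₂²))·(4H₀a₂₂v/(a₂₂² + (ωc₁)²) + d₄)^{1/2} − (a₁₂c₁/a₂₂)v + d₅ on an interval where the radicand is positive. Then g satisfies g''(v)/(a₁₂c₁ + a₂₂g'(v))³ = −2H₀/(a₂₂² + (ωc₁)²). -/

import Mathlib

/-- Case (b) of the CIMC classification (`f` linear, `a₂₂ ≠ 0`): the explicit
square-root function `g` solves `g''/(a₁₂c₁ + a₂₂g')³ = −2H₀/(a₂₂² + (ωc₁)²)`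
where the radicand is positive. -/
theorem stmt7 (a₁₂ a₂₂ c₁ ω H₀ d₄ d₅ : ℝ)
    (ha : a₁₂ * a₂₂ ≠ 0) (hω : ω ≠ 0) (hH₀ : H₀ ≠ 0)
    (g : ℝ → ℝ)
    (hgdef : g = fun v => (a₂₂ ^ 2 + (ω * c₁) ^ 2) / (2 * H₀ * a₂₂ ^ 2)
      * Real.sqrt (4 * H₀ * a₂₂ * v / (a₂₂ ^ 2 + (ω * c₁) ^ 2) + d₄)
      - (a₁₂ * c₁ / a₂₂) * v + d₅) :
    ∀ v : ℝ, 0 < 4 * H₀ * a₂₂ * v / (a₂₂ ^ 2 + (ω * c₁) ^ 2) + d₄ →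
      deriv (deriv g) v / (a₁₂ * c₁ + a₂₂ * deriv g v) ^ 3
        = -(2 * H₀) / (a₂₂ ^ 2 + (ω * c₁) ^ 2) := by
  intro v hv
  have ha₂₂ : a₂₂ ≠ 0 := right_ne_zero_of_mul ha
  set E : ℝ := a₂₂ ^ 2 + (ω * c₁) ^ 2 with hEdef
  have hE : 0 < E := by positivity
  set u : ℝ → ℝ := fun w => 4 * H₀ * a₂₂ * w / E + d₄ with hu
  -- u is positive near v
  have hucont : Continuous u := by fun_prop
  have hnhds : ∀ᶠ w in nhds v, 0 < u w := by
    have : IsOpen (u ⁻¹' Set.Ioi 0) := isOpen_Ioi.preimage hucont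
    exact this.mem_nhds (by simpa using hv)
  -- derivative of g at any point where u is positive
  have hderiv : ∀ w : ℝ, 0 < u w →
      HasDerivAt g ((a₂₂ * Real.sqrt (u w))⁻¹ - a₁₂ * c₁ / a₂₂) w := by
    intro w hw
    have h1 : HasDerivAt u (4 * H₀ * a₂₂ / E) w := by
      simpa [hu] using (((hasDerivAt_id w).const_mul (4 * H₀ * a₂₂)).div_const E).add_const d₄
    have h2 : HasDerivAt (fun w => Real.sqrt (u w))
        (1 / (2 * Real.sqrt (u w)) * (4 * H₀ * a₂₂ / E)) w :=
      (Real.hasDerivAt_sqrt (ne_of_gt hw)).comp w h1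
    have h3 : HasDerivAt g
        (E / (2 * H₀ * a₂₂ ^ 2) * (1 / (2 * Real.sqrt (u w)) * (4 * H₀ * a₂₂ / E))
          - a₁₂ * c₁ / a₂₂ * 1) w := by
      rw [hgdef]
      exact ((h2.const_mul (E / (2 * H₀ * a₂₂ ^ 2))).sub
        ((hasDerivAt_id w).const_mul (a₁₂ * c₁ / a₂₂))).add_const d₅
    convert h3 using 1
    have hs : Real.sqrt (u w) ≠ 0 := Real.sqrt_ne_zero'.mpr hw
    field_simp
    ring
  -- deriv g near v
  have hgd : deriv g =ᶠ[nhds v]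
      fun w => (a₂₂ * Real.sqrt (u w))⁻¹ - a₁₂ * c₁ / a₂₂ := by
    filter_upwards [hnhds] with w hw using (hderiv w hw).deriv
  have hgdv : deriv g v = (a₂₂ * Real.sqrt (u v))⁻¹ - a₁₂ * c₁ / a₂₂ :=
    (hderiv v hv).deriv
  -- second derivative at v
  set s : ℝ := Real.sqrt (u v) with hsdef
  have hs0 : 0 < s := Real.sqrt_pos.mpr hv
  have hs : s ≠ 0 := ne_of_gt hs0
  have h1 : HasDerivAt u (4 * H₀ * a₂₂ / E) v := by
    simpa [hu] using (((hasDerivAt_id v).const_mul (4 * H₀ * a₂₂)).div_const E).add_const d₄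
  have h2 : HasDerivAt (fun w => a₂₂ * Real.sqrt (u w))
      (a₂₂ * (1 / (2 * s) * (4 * H₀ * a₂₂ / E))) v :=
    ((Real.hasDerivAt_sqrt (ne_of_gt hv)).comp v h1).const_mul a₂₂
  have hfne : a₂₂ * Real.sqrt (u v) ≠ 0 := mul_ne_zero ha₂₂ hs
  have h4 : HasDerivAt (fun w => (a₂₂ * Real.sqrt (u w))⁻¹ - a₁₂ * c₁ / a₂₂)
      (-(a₂₂ * (1 / (2 * s) * (4 * H₀ * a₂₂ / E))) / (a₂₂ * s) ^ 2) v :=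
    (h2.inv hfne).sub_const _
  have hsecond : deriv (deriv g) v
      = -(a₂₂ * (1 / (2 * s) * (4 * H₀ * a₂₂ / E))) / (a₂₂ * s) ^ 2 := by
    rw [hgd.deriv_eq]
    exact h4.deriv
  rw [hsecond, hgdv]
  have key : a₁₂ * c₁ + a₂₂ * ((a₂₂ * s)⁻¹ - a₁₂ * c₁ / a₂₂) = s⁻¹ := by
    field_simp
    ring
  rw [key]
  field_simp
  ring
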